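/- Let (Z_n) be integrable random variables with E Z_{n+1} ≥ E Z_n for all n, and suppose there are constants R ≥ 1, C such that for all n ≥ R, E Z_{n+1} ≤ (1/2)(E Z_{n+1-R} + E Z_{n+1-R}) - (1/2) E|Z_{n+1-R} - Z'_{n+1-R}| + C, where Z'_m is an independent copy of Z_m. Then sup_n E|Z_n - Z'_n| ≤ 2C, and consequently (Z_n - E Z_n) is tight. -/

import Mathlib

open MeasureTheory ProbabilityTheory

lemma mean_abs_dev_le {Ω : Type*} [MeasureSpace Ω]
    [IsProbabilityMeasure (ℙ : Measure Ω)] (X Y : Ω → ℝ)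
    (hX : Integrable X) (hY : Integrable Y)
    (hid : IdentDistrib Y X ℙ ℙ) (hind : IndepFun X Y ℙ) :
    (∫ ω, |X ω - ∫ ω', X ω'|) ≤ ∫ ω, |X ω - Y ω| := by
  have hX' : AEMeasurable X ℙ := hX.aemeasurable
  have hY' : AEMeasurable Y ℙ := hY.aemeasurable
  set f : ℝ × ℝ → ℝ := fun p => |p.1 - p.2| with hf
  have hfc : Continuous f := (continuous_fst.sub continuous_snd).abs
  have hprod : Measure.map (fun ω => (X ω, Y ω)) ℙ = (Measure.map X ℙ).prod (Measure.map Y ℙ) :=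
    (indepFun_iff_map_prod_eq_prod_map_map hX' hY').mp hind
  -- integrability of g on the product of ℙ with itself
  have hXfst : Integrable (fun p : Ω × Ω => X p.1) ((Measure.prod ℙ ℙ)) := by
    have h1 : Measure.map (Prod.fst : Ω × Ω → Ω) ((Measure.prod ℙ ℙ)) = ℙ := by simp
    have := (integrable_map_measure (f := (Prod.fst : Ω × Ω → Ω)) (g := X)
      (by rw [h1]; exact hX.1) measurable_fst.aemeasurable).mp (by rw [h1]; exact hX)
    exact this
  have hYsnd : Integrable (fun p : Ω × Ω => Y p.2) ((Measure.prod ℙ ℙ)) := by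
    have h1 : Measure.map (Prod.snd : Ω × Ω → Ω) ((Measure.prod ℙ ℙ)) = ℙ := by simp
    have := (integrable_map_measure (f := (Prod.snd : Ω × Ω → Ω)) (g := Y)
      (by rw [h1]; exact hY.1) measurable_snd.aemeasurable).mp (by rw [h1]; exact hY)
    exact this
  have hg : Integrable (fun p : Ω × Ω => |X p.1 - Y p.2|) ((Measure.prod ℙ ℙ)) := (hXfst.sub hYsnd).abs
  have hφint : Integrable (fun ω => ∫ ω', |X ω - Y ω'|) ℙ := hg.integral_prod_left
  have hEY : (∫ ω, Y ω) = ∫ ω, X ω := hid.integral_eq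
  -- pointwise bound
  have hpt : ∀ ω, |X ω - ∫ ω', X ω'| ≤ ∫ ω', |X ω - Y ω'| := by
    intro ω
    have h1 : X ω - ∫ ω', X ω' = ∫ ω', (X ω - Y ω') := by
      rw [integral_sub (integrable_const _) hY, integral_const]
      simp [hEY]
    calc |X ω - ∫ ω', X ω'| = |∫ ω', (X ω - Y ω')| := by rw [h1]
      _ ≤ ∫ ω', |X ω - Y ω'| := by
          simpa [Real.norm_eq_abs] using
            norm_integral_le_integral_norm (fun ω' => X ω - Y ω')
  have step1 : (∫ ω, |X ω - ∫ ω', X ω'|) ≤ ∫ ω, ∫ ω', |X ω - Y ω'| :=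
    integral_mono ((hX.sub (integrable_const _)).abs) hφint hpt
  -- the Lipschitz function φ
  set φ : ℝ → ℝ := fun x => ∫ ω', |x - Y ω'| with hφ
  have hφint' : ∀ x, Integrable (fun ω' => |x - Y ω'|) ℙ := fun x =>
    ((integrable_const x).sub hY).abs
  have hlip : LipschitzWith 1 φ := by
    apply LipschitzWith.of_dist_le_mul
    intro x x'
    rw [Real.dist_eq, Real.dist_eq, NNReal.coe_one, one_mul]
    have h1 : φ x - φ x' = ∫ ω', (|x - Y ω'| - |x' - Y ω'|) :=
      (integral_sub (hφint' x) (hφint' x')).symm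
    calc |φ x - φ x'| = |∫ ω', (|x - Y ω'| - |x' - Y ω'|)| := by rw [h1]
      _ ≤ ∫ ω', abs (|x - Y ω'| - |x' - Y ω'|) := by
          simpa [Real.norm_eq_abs] using
            norm_integral_le_integral_norm (fun ω' => |x - Y ω'| - |x' - Y ω'|)
      _ ≤ ∫ (_ : Ω), |x - x'| :=
          integral_mono (((hφint' x).sub (hφint' x')).abs) (integrable_const _)
            (fun ω' => by
              have h := abs_abs_sub_abs_le_abs_sub (x - Y ω') (x' - Y ω')
              have h2 : x - Y ω' - (x' - Y ω') = x - x' := by ring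
              simpa [h2] using h)
      _ = |x - x'| := by simp
  -- integrability of f on the product of the pushforwards
  have hfint : Integrable f ((Measure.map X ℙ).prod (Measure.map Y ℙ)) := by
    rw [← hprod]
    exact (integrable_map_measure (hfc.aestronglyMeasurable) (hX'.prodMk hY')).mpr
      ((hX.sub hY).abs)
  calc (∫ ω, |X ω - ∫ ω', X ω'|) ≤ ∫ ω, ∫ ω', |X ω - Y ω'| := step1
    _ = ∫ ω, φ (X ω) := rfl
    _ = ∫ x, φ x ∂(Measure.map X ℙ) :=
        (integral_map hX' hlip.continuous.aestronglyMeasurable).symm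
    _ = ∫ x, ∫ y, f (x, y) ∂(Measure.map Y ℙ) ∂(Measure.map X ℙ) := by
        refine integral_congr_ae (Filter.Eventually.of_forall fun x => ?_)
        exact (integral_map hY'
          ((continuous_const.sub continuous_id).abs.aestronglyMeasurable)).symm
    _ = ∫ p, f p ∂((Measure.map X ℙ).prod (Measure.map Y ℙ)) := (integral_prod f hfint).symm
    _ = ∫ p, f p ∂(Measure.map (fun ω => (X ω, Y ω)) ℙ) := by rw [hprod]
    _ = ∫ ω, |X ω - Y ω| := integral_map (hX'.prodMk hY') hfc.aestronglyMeasurable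

theorem dekking_host_property_two {Ω : Type*} [MeasureSpace Ω]
    [IsProbabilityMeasure (ℙ : Measure Ω)]
    (Z Z' : ℕ → Ω → ℝ) (C : ℝ) (R : ℕ) (hR : 1 ≤ R)
    (hint : ∀ n, Integrable (Z n)) (hint' : ∀ n, Integrable (Z' n))
    (hcopy : ∀ n, IdentDistrib (Z' n) (Z n) ℙ ℙ)
    (hindep : ∀ n, IndepFun (Z n) (Z' n) ℙ)
    (hmono : ∀ n, (∫ ω, Z n ω) ≤ ∫ ω, Z (n + 1) ω)
    (hrec : ∀ n, R ≤ n →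
      (∫ ω, Z (n + 1) ω) ≤
        (1 / 2) * ((∫ ω, Z (n + 1 - R) ω) + ∫ ω, Z (n + 1 - R) ω)
          - (1 / 2) * (∫ ω, |Z (n + 1 - R) ω - Z' (n + 1 - R) ω|) + C) :
    (∀ n, 1 ≤ n → (∫ ω, |Z n ω - Z' n ω|) ≤ 2 * C) ∧
    (∀ ε > 0, ∃ r : ℝ, ∀ n,
      (ℙ {ω | |Z n ω - ∫ ω', Z n ω'| > r}).toReal < ε) := by
  have hM : Monotone (fun k => ∫ ω, Z k ω) := monotone_nat_of_le_succ hmono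
  have part1 : ∀ n, 1 ≤ n → (∫ ω, |Z n ω - Z' n ω|) ≤ 2 * C := by
    intro n hn
    have hm : R ≤ n + R - 1 := by omega
    have h := hrec (n + R - 1) hm
    have hmR : n + R - 1 + 1 - R = n := by omega
    rw [hmR] at h
    have h2 : (∫ ω, Z n ω) ≤ ∫ ω, Z (n + R - 1 + 1) ω := hM (by omega)
    linarith
  refine ⟨part1, ?_⟩
  intro ε hε
  set M : ℝ := max (∫ ω, |Z 0 ω - ∫ ω', Z 0 ω'|) (2 * C) with hMdef
  have hbound : ∀ n, (∫ ω, |Z n ω - ∫ ω', Z n ω'|) ≤ M := by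
    intro n
    rcases Nat.eq_zero_or_pos n with h0 | h1
    · rw [h0]; exact le_max_left _ _
    · exact le_trans
        (mean_abs_dev_le (Z n) (Z' n) (hint n) (hint' n) (hcopy n) (hindep n))
        (le_trans (part1 n h1) (le_max_right _ _))
  have hM0 : 0 ≤ M :=
    le_trans (integral_nonneg fun ω => abs_nonneg _) (le_max_left _ _)
  set r : ℝ := (M + 1) / ε with hrdef
  have hr : 0 < r := div_pos (by linarith) hε
  refine ⟨r, fun n => ?_⟩
  set f : Ω → ℝ := fun ω => |Z n ω - ∫ ω', Z n ω'| with hfdef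
  have hfint : Integrable f ℙ := ((hint n).sub (integrable_const _)).abs
  have hmarkov := mul_meas_ge_le_integral_of_nonneg
    (Filter.Eventually.of_forall fun ω => abs_nonneg _) hfint r
  have hsub : {ω | f ω > r} ⊆ {ω | r ≤ f ω} := fun ω hω => le_of_lt (Set.mem_setOf_eq ▸ hω)
  have h1 : (ℙ {ω | f ω > r}).toReal ≤ (ℙ {ω | r ≤ f ω}).toReal :=
    ENNReal.toReal_mono (measure_ne_top _ _) (measure_mono hsub)
  have h2 : (ℙ {ω | r ≤ f ω}).toReal ≤ M / r := by
    rw [le_div_iff₀ hr]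
    have := hbound n
    nlinarith [show r * (ℙ {ω | r ≤ f ω}).toReal ≤ ∫ ω, |Z n ω - ∫ ω', Z n ω'| from hmarkov]
  have h3 : M / r < ε := by
    rw [div_lt_iff₀ hr, hrdef]
    rw [mul_div_assoc']
    rw [lt_div_iff₀ hε] at *
    nlinarith
  calc (ℙ {ω | f ω > r}).toReal ≤ (ℙ {ω | r ≤ f ω}).toReal := h1
    _ ≤ M / r := h2
    _ < ε := h3
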